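/- Let M be a matching of G and define φ(M) = ⋃_{uv∈M} {u^1 v^β, u^2 v^{β−1}, …, u^β v^1} where β = w(u,v). Then φ(M) is a matching of the unfolded graph φ(G), and |φ(M)| = Σ_{uv∈M} w(u,v). -/
import Mathlib


open Finset

variable {V : Type*} [Fintype V] [DecidableEq V]

/-- `C` is a (weighted vertex) cover of the bipartite graph on parts `X`, `Y`
with edge weights `w` (where `w x y = 0` means no edge). -/
def IsCover (X Y : Finset V) (w : V → V → ℕ) (C : V → ℕ) : Prop :=
  ∀ x ∈ X, ∀ y ∈ Y, w x y ≤ C x + C y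

/-- The weight of a cover: the sum of its values over all nodes. -/
def coverWt (X Y : Finset V) (C : V → ℕ) : ℕ := ∑ u ∈ X ∪ Y, C u

/-- `M` is a matching of the weighted bipartite graph: a set of pairwise
node-disjoint edges, each going from `X` to `Y` with positive weight. -/
def IsBMatching (X Y : Finset V) (w : V → V → ℕ) (M : Finset (V × V)) : Prop :=
  (∀ e ∈ M, e.1 ∈ X ∧ e.2 ∈ Y ∧ 0 < w e.1 e.2) ∧
  (∀ e ∈ M, ∀ f ∈ M, e ≠ f → e.1 ≠ f.1 ∧ e.2 ≠ f.2)

/-- The total weight of a matching. -/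
def mWt (w : V → V → ℕ) (M : Finset (V × V)) : ℕ := ∑ e ∈ M, w e.1 e.2

/-- Adjacency in the unfolded graph `φ(G)`: the copies `u^i` of a node `u` are the
pairs `(u, i)` with `i ≥ 1`, and for each edge `uv` of weight `β = w u v` the
unfolded graph has the (unweighted) edges `u^i v^{β+1-i}` for `1 ≤ i ≤ β`. -/
def phiAdj (X Y : Finset V) (w : V → V → ℕ) (a b : V × ℕ) : Prop :=
  (a.1 ∈ X ∧ b.1 ∈ Y ∧ 1 ≤ a.2 ∧ 1 ≤ b.2 ∧ 0 < w a.1 b.1 ∧ a.2 + b.2 = w a.1 b.1 + 1) ∨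
  (b.1 ∈ X ∧ a.1 ∈ Y ∧ 1 ≤ b.2 ∧ 1 ≤ a.2 ∧ 0 < w b.1 a.1 ∧ b.2 + a.2 = w b.1 a.1 + 1)

/-- `M` is a matching (set of pairwise node-disjoint edges) of the unweighted
graph with adjacency relation `adj`. -/
def IsUMatching {α : Type*} (adj : α → α → Prop) (M : Finset (α × α)) : Prop :=
  (∀ e ∈ M, adj e.1 e.2) ∧ (∀ e ∈ M, e.1 ≠ e.2) ∧
  (∀ e ∈ M, ∀ f ∈ M, e ≠ f →
    e.1 ≠ f.1 ∧ e.1 ≠ f.2 ∧ e.2 ≠ f.1 ∧ e.2 ≠ f.2)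

/-- The unfolding `φ(M)` of a matching `M` of `G`: each edge `uv ∈ M` of weight
`β` contributes the edges `u^1 v^β, …, u^β v^1`. -/
def phiM (w : V → V → ℕ) (M : Finset (V × V)) : Finset ((V × ℕ) × (V × ℕ)) :=
  M.biUnion fun e =>
    (Finset.Icc 1 (w e.1 e.2)).image fun i => ((e.1, i), (e.2, w e.1 e.2 + 1 - i))

/-- The number of copies of a node `u` in the unfolded graph: the maximum weight
of an edge incident to `u`. -/
def alphaCopies (X Y : Finset V) (w : V → V → ℕ) (u : V) : ℕ :=
  (X ∪ Y).sup fun v => max (w u v) (w v u)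

/-- The unfolding `φ(M)` of a matching `M` of `G` is a matching of `φ(G)`, and
its cardinality is the total weight of `M`. -/
theorem phiM_is_matching_card_eq_weight
    (X Y : Finset V) (hXY : Disjoint X Y) (w : V → V → ℕ)
    (M : Finset (V × V)) (hM : IsBMatching X Y w M) :
    IsUMatching (phiAdj X Y w) (phiM w M) ∧
    (phiM w M).card = ∑ e ∈ M, w e.1 e.2 := by

  have mem_phiM : ∀ p, p ∈ phiM w M ↔ ∃ e ∈ M, ∃ i ∈ Finset.Icc 1 (w e.1 e.2),
      p = ((e.1, i), (e.2, w e.1 e.2 + 1 - i)) := by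
    intro p
    simp [phiM, eq_comm]
  obtain ⟨hM1, hM2⟩ := hM
  have hne : ∀ x ∈ X, ∀ y ∈ Y, x ≠ y := fun x hx y hy h => by
    exact absurd hy (Finset.disjoint_left.mp hXY (h ▸ hx))
  constructor
  · refine ⟨?_, ?_, ?_⟩
    · intro p hp
      obtain ⟨e, he, i, hi, rfl⟩ := (mem_phiM p).mp hp
      obtain ⟨hx, hy, hw⟩ := hM1 e he
      simp only [Finset.mem_Icc] at hi
      left
      dsimp only
      refine ⟨hx, hy, hi.1, ?_, hw, ?_⟩ <;> omega
    · intro p hp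
      obtain ⟨e, he, i, hi, rfl⟩ := (mem_phiM p).mp hp
      obtain ⟨hx, hy, hw⟩ := hM1 e he
      intro h
      exact hne _ hx _ hy (congrArg Prod.fst h)
    · intro p hp q hq hpq
      obtain ⟨e, he, i, hi, rfl⟩ := (mem_phiM p).mp hp
      obtain ⟨f, hf, j, hj, rfl⟩ := (mem_phiM q).mp hq
      obtain ⟨hex, hey, hew⟩ := hM1 e he
      obtain ⟨hfx, hfy, hfw⟩ := hM1 f hf
      simp only [Finset.mem_Icc] at hi hj
      by_cases hef : e = f
      · subst hef
        have hij : i ≠ j := by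
          intro h; exact hpq (by simp [h])
        refine ⟨?_, ?_, ?_, ?_⟩ <;> intro h
        · exact hij (congrArg Prod.snd h)
        · exact hne _ hex _ hey (congrArg Prod.fst h)
        · exact hne _ hex _ hey (congrArg Prod.fst h).symm
        · simp only [Prod.mk.injEq] at h
          omega
      · obtain ⟨h1, h2⟩ := hM2 e he f hf hef
        refine ⟨?_, ?_, ?_, ?_⟩ <;> intro h <;>
          simp only [Prod.mk.injEq] at h
        · exact h1 h.1
        · exact hne _ hex _ hfy h.1
        · exact hne _ hfx _ hey h.1.symm
        · exact h2 h.1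
  · rw [phiM, Finset.card_biUnion]
    · refine Finset.sum_congr rfl fun e he => ?_
      rw [Finset.card_image_of_injective, Nat.card_Icc]
      · omega
      · intro a b h
        exact congrArg (Prod.snd ∘ Prod.fst) h
    · intro e he f hf hef
      obtain ⟨h1, _⟩ := hM2 e he f hf hef
      simp only [Finset.disjoint_left, Finset.mem_image]
      rintro p ⟨i, hi, rfl⟩ ⟨j, hj, h⟩
      simp only [Prod.mk.injEq] at h
      exact h1 h.1.1.symm
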